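/- Let A ⊆ ℝ be open and invex w.r.t. η satisfying Condition C, a, b ∈ A with a < a + η(b,a), f differentiable with f' integrable on [a, a+η(b,a)], and |f'|^q preinvex there for some q > 1 with conjugate p. Then |f(a + η(b,a)/2) - (1/η(b,a)) ∫_a^{a+η(b,a)} f(u) du| ≤ (1/(p+1))^{1/p} (η(b,a)/4) [ ((3|f'(a)|^q + |f'(a+η(b,a))|^q)/4)^{1/q} + ((3|f'(a+η(b,a))|^q + |f'(a)|^q)/4)^{1/q} ]. -/

import Mathlib

open MeasureTheory intervalIntegral Set

lemma holder_Ioc {p q α β : ℝ} (hpq : Real.HolderConjugate p q) (hαβ : α ≤ β)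
    {F G : ℝ → ℝ} (CF CG : ℝ)
    (hFm : AEStronglyMeasurable F (volume.restrict (Ioc α β)))
    (hGm : AEStronglyMeasurable G (volume.restrict (Ioc α β)))
    (hF : ∀ u ∈ Ioc α β, 0 ≤ F u ∧ F u ≤ CF)
    (hG : ∀ u ∈ Ioc α β, 0 ≤ G u ∧ G u ≤ CG) :
    ∫ u in α..β, F u * G u ≤
      (∫ u in α..β, F u ^ p) ^ (1 / p) * (∫ u in α..β, G u ^ q) ^ (1 / q) := by
  rw [intervalIntegral.integral_of_le hαβ, intervalIntegral.integral_of_le hαβ,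
    intervalIntegral.integral_of_le hαβ]
  haveI : IsFiniteMeasure (volume.restrict (Ioc α β)) := by
    constructor
    rw [Measure.restrict_apply_univ, Real.volume_Ioc]
    exact ENNReal.ofReal_lt_top
  have hFae : ∀ᵐ u ∂(volume.restrict (Ioc α β)), 0 ≤ F u ∧ F u ≤ CF :=
    (ae_restrict_iff' measurableSet_Ioc).2 (Filter.Eventually.of_forall hF)
  have hGae : ∀ᵐ u ∂(volume.restrict (Ioc α β)), 0 ≤ G u ∧ G u ≤ CG :=
    (ae_restrict_iff' measurableSet_Ioc).2 (Filter.Eventually.of_forall hG)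
  refine integral_mul_le_Lp_mul_Lq_of_nonneg hpq (hFae.mono fun u h => h.1)
    (hGae.mono fun u h => h.1) ?_ ?_
  · exact MemLp.of_bound hFm CF (hFae.mono fun u h => by
      rw [Real.norm_of_nonneg h.1]; exact h.2)
  · exact MemLp.of_bound hGm CG (hGae.mono fun u h => by
      rw [Real.norm_of_nonneg h.1]; exact h.2)

set_option maxHeartbeats 2000000 in
theorem midpoint_preinvex_holder
    (A : Set ℝ) (η : ℝ → ℝ → ℝ) (a b p q : ℝ) (f f' : ℝ → ℝ)
    (hA : IsOpen A)
    (hinv : ∀ x ∈ A, ∀ y ∈ A, ∀ t ∈ Icc (0:ℝ) 1, x + t * η y x ∈ A)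
    (hC : ∀ x ∈ A, ∀ y ∈ A, ∀ t ∈ Icc (0:ℝ) 1,
      η y (y + t * η x y) = -t * η x y ∧ η x (y + t * η x y) = (1 - t) * η x y)
    (ha : a ∈ A) (hb : b ∈ A) (hab : a < a + η b a)
    (hf : ∀ x ∈ A, HasDerivAt f (f' x) x)
    (hint : IntervalIntegrable f' volume a (a + η b a))
    (hq : 1 < q) (hpq : 1 / p + 1 / q = 1)
    (hpre : ∀ x ∈ Icc a (a + η b a), ∀ y ∈ Icc a (a + η b a), ∀ t ∈ Icc (0:ℝ) 1,
      |f' (x + t * η y x)| ^ q ≤ (1 - t) * |f' x| ^ q + t * |f' y| ^ q) :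
    |f (a + η b a / 2) - (1 / η b a) * ∫ u in a..(a + η b a), f u| ≤
      (1 / (p + 1)) ^ (1 / p) * (η b a / 4) *
        (((3 * |f' a| ^ q + |f' (a + η b a)| ^ q) / 4) ^ (1 / q) +
         ((3 * |f' (a + η b a)| ^ q + |f' a| ^ q) / 4) ^ (1 / q)) := by
  set L := η b a with hLdef
  have hL : 0 < L := by linarith
  set c := a + L with hcdef
  set m := a + L / 2 with hmdef
  have ham : a ≤ m := by rw [hmdef]; linarith
  have hmc : m ≤ c := by rw [hmdef, hcdef]; linarith
  have hac : a ≤ c := ham.trans hmc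
  have hma : m - a = L / 2 := by rw [hmdef]; ring
  have hcm : c - m = L / 2 := by rw [hcdef, hmdef]; ring
  -- exponents
  have hq0 : (0:ℝ) < q := by linarith
  have hq1 : (0:ℝ) < 1 / q := by positivity
  have hq1' : 1 / q < 1 := by rw [div_lt_one hq0]; exact hq
  have h1p : 0 < 1 / p := by linarith
  have hppos : 0 < p := by
    rcases lt_trichotomy p 0 with h | h | h
    · exfalso; have : 1 / p < 0 := by exact div_neg_of_pos_of_neg one_pos h
      linarith
    · exfalso; rw [h] at h1p; simp at h1p
    · exact h
  have hp1 : 1 < p := by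
    have : 1 / p < 1 := by linarith
    rwa [div_lt_one hppos] at this
  have hconj : Real.HolderConjugate p q := by
    rw [Real.holderConjugate_iff]; constructor
    · exact hp1
    · rw [← one_div, ← one_div]; exact hpq
  -- subset
  have hsub : Icc a c ⊆ A := by
    intro u hu
    have ht : (u - a) / L ∈ Icc (0:ℝ) 1 := by
      constructor
      · exact div_nonneg (by linarith [hu.1]) hL.le
      · rw [div_le_one hL]; have := hu.2; rw [hcdef] at this; linarith
    have h1 := hinv a ha b hb _ ht
    have h2 : a + (u - a) / L * η b a = u := by rw [← hLdef]; field_simp; ring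
    rwa [h2] at h1
  have hfd : ∀ x ∈ Icc a c, HasDerivAt f (f' x) x := fun x hx => hf x (hsub hx)
  have hfc : ContinuousOn f (Icc a c) := fun x hx =>
    ((hfd x hx).continuousAt).continuousWithinAt
  have hfint1 : IntervalIntegrable f volume a m := by
    apply ContinuousOn.intervalIntegrable
    rw [uIcc_of_le ham]
    exact hfc.mono (Icc_subset_Icc le_rfl hmc)
  have hfint2 : IntervalIntegrable f volume m c := by
    apply ContinuousOn.intervalIntegrable
    rw [uIcc_of_le hmc]
    exact hfc.mono (Icc_subset_Icc ham le_rfl)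
  have hint1 : IntervalIntegrable f' volume a m :=
    hint.mono_set (by rw [uIcc_of_le ham, uIcc_of_le hac]; exact Icc_subset_Icc le_rfl hmc)
  have hint2 : IntervalIntegrable f' volume m c :=
    hint.mono_set (by rw [uIcc_of_le hmc, uIcc_of_le hac]; exact Icc_subset_Icc ham le_rfl)
  -- η a c = -L, pointwise preinvexity bound
  have hηac : η a c = -L := by
    have h1 := (hC b hb a ha 1 ⟨zero_le_one, le_rfl⟩).1
    have h2 : a + 1 * η b a = c := by rw [hcdef, hLdef]; ring
    rw [h2] at h1
    rw [h1, hLdef]; ring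
  set Ka := |f' a| ^ q with hKa
  set Kc := |f' c| ^ q with hKc
  have hKa0 : 0 ≤ Ka := Real.rpow_nonneg (abs_nonneg _) q
  have hKc0 : 0 ≤ Kc := Real.rpow_nonneg (abs_nonneg _) q
  have hptK : ∀ u ∈ Icc a c, |f' u| ^ q ≤ (c - u) / L * Ka + (u - a) / L * Kc := by
    intro u hu
    have ht : (c - u) / L ∈ Icc (0:ℝ) 1 := by
      constructor
      · exact div_nonneg (by linarith [hu.2]) hL.le
      · rw [div_le_one hL]; have := hu.1; rw [hcdef]; linarith
    have h2 := hpre c ⟨hac, le_rfl⟩ a ⟨le_rfl, hac⟩ ((c - u) / L) ht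
    have harg : c + (c - u) / L * η a c = u := by rw [hηac]; field_simp; ring
    rw [harg] at h2
    have hcoef : 1 - (c - u) / L = (u - a) / L := by
      rw [hcdef]; field_simp; ring
    rw [hcoef] at h2
    rw [hKa, hKc]
    linarith
  have hbd : ∀ u ∈ Icc a c, |f' u| ^ q ≤ Ka + Kc := by
    intro u hu
    have h1 := hptK u hu
    have h2 : (c - u) / L ≤ 1 := by rw [div_le_one hL]; have := hu.1; rw [hcdef]; linarith
    have h3 : (u - a) / L ≤ 1 := by rw [div_le_one hL]; have := hu.2; rw [hcdef] at this; linarith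
    have h4 : 0 ≤ (c - u) / L := div_nonneg (by linarith [hu.2]) hL.le
    have h5 : 0 ≤ (u - a) / L := div_nonneg (by linarith [hu.1]) hL.le
    nlinarith
  have habsbd : ∀ u ∈ Icc a c, |f' u| ≤ (Ka + Kc) ^ (1 / q) := by
    intro u hu
    have h1 : |f' u| = (|f' u| ^ q) ^ (1 / q) := by
      rw [one_div, Real.rpow_rpow_inv (abs_nonneg _) (ne_of_gt hq0)]
    rw [h1]
    exact Real.rpow_le_rpow (Real.rpow_nonneg (abs_nonneg _) q) (hbd u hu) hq1.le
  -- measurability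
  have hmeasc : AEStronglyMeasurable f' (volume.restrict (Ioc a c)) := by
    have := hint.1
    rw [intervalIntegrable_iff_integrableOn_Ioc_of_le hac] at hint
    exact hint.aestronglyMeasurable
  have hmeas1 : AEStronglyMeasurable f' (volume.restrict (Ioc a m)) :=
    hmeasc.mono_measure (Measure.restrict_mono (Ioc_subset_Ioc le_rfl hmc) le_rfl)
  have hmeas2 : AEStronglyMeasurable f' (volume.restrict (Ioc m c)) :=
    hmeasc.mono_measure (Measure.restrict_mono (Ioc_subset_Ioc ham le_rfl) le_rfl)
  have habsmeas1 : AEStronglyMeasurable (fun u => |f' u|) (volume.restrict (Ioc a m)) := by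
    simpa [Real.norm_eq_abs] using hmeas1.norm
  have habsmeas2 : AEStronglyMeasurable (fun u => |f' u|) (volume.restrict (Ioc m c)) := by
    simpa [Real.norm_eq_abs] using hmeas2.norm
  -- integrability of |f'|^q
  have hqmeas1 : AEStronglyMeasurable (fun u => |f' u| ^ q) (volume.restrict (Ioc a m)) :=
    (Real.continuous_rpow_const hq0.le).comp_aestronglyMeasurable habsmeas1
  have hqmeas2 : AEStronglyMeasurable (fun u => |f' u| ^ q) (volume.restrict (Ioc m c)) :=
    (Real.continuous_rpow_const hq0.le).comp_aestronglyMeasurable habsmeas2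
  have hqint1 : IntervalIntegrable (fun u => |f' u| ^ q) volume a m := by
    rw [intervalIntegrable_iff_integrableOn_Ioc_of_le ham]
    refine Integrable.mono' (g := fun _ => Ka + Kc) ?_ hqmeas1 ?_
    · exact integrableOn_const measure_Ioc_lt_top.ne
    · refine (ae_restrict_iff' measurableSet_Ioc).2 (Filter.Eventually.of_forall fun u hu => ?_)
      rw [Real.norm_of_nonneg (Real.rpow_nonneg (abs_nonneg _) q)]
      exact hbd u ⟨hu.1.le, hu.2.trans hmc⟩
  have hqint2 : IntervalIntegrable (fun u => |f' u| ^ q) volume m c := by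
    rw [intervalIntegrable_iff_integrableOn_Ioc_of_le hmc]
    refine Integrable.mono' (g := fun _ => Ka + Kc) ?_ hqmeas2 ?_
    · exact integrableOn_const measure_Ioc_lt_top.ne
    · refine (ae_restrict_iff' measurableSet_Ioc).2 (Filter.Eventually.of_forall fun u hu => ?_)
      rw [Real.norm_of_nonneg (Real.rpow_nonneg (abs_nonneg _) q)]
      exact hbd u ⟨ham.trans hu.1.le, hu.2⟩
  -- integration by parts
  have hI1 : ∫ u in a..m, (u - a) * f' u = (m - a) * f m - ∫ u in a..m, f u := by
    have h := integral_mul_deriv_eq_deriv_mul (a := a) (b := m)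
      (u := fun x => x - a) (u' := fun _ => (1:ℝ)) (v := f) (v' := f')
      (fun x _ => (hasDerivAt_id x).sub_const a)
      (fun x hx => hfd x (by rw [uIcc_of_le ham] at hx; exact Icc_subset_Icc le_rfl hmc hx))
      intervalIntegrable_const hint1
    simp only [sub_self, zero_mul, sub_zero, one_mul] at h
    rw [h]
  have hI2 : ∫ u in m..c, (u - c) * f' u = (c - m) * f m - ∫ u in m..c, f u := by
    have h := integral_mul_deriv_eq_deriv_mul (a := m) (b := c)
      (u := fun x => x - c) (u' := fun _ => (1:ℝ)) (v := f) (v' := f')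
      (fun x _ => (hasDerivAt_id x).sub_const c)
      (fun x hx => hfd x (by rw [uIcc_of_le hmc] at hx; exact Icc_subset_Icc ham le_rfl hx))
      intervalIntegrable_const hint2
    simp only [sub_self, zero_mul, zero_sub, one_mul] at h
    rw [h]; ring
  have hiden : f m - (1 / L) * ∫ u in a..c, f u =
      (1 / L) * ((∫ u in a..m, (u - a) * f' u) + ∫ u in m..c, (u - c) * f' u) := by
    rw [hI1, hI2, ← intervalIntegral.integral_add_adjacent_intervals hfint1 hfint2,
      hma, hcm]
    field_simp
    ring
  -- abs bounds
  have habs1 : |∫ u in a..m, (u - a) * f' u| ≤ ∫ u in a..m, (u - a) * |f' u| := by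
    refine (intervalIntegral.abs_integral_le_integral_abs ham).trans_eq ?_
    refine intervalIntegral.integral_congr fun u hu => ?_
    rw [uIcc_of_le ham] at hu
    rw [abs_mul, abs_of_nonneg (by linarith [hu.1] : (0:ℝ) ≤ u - a)]
  have habs2 : |∫ u in m..c, (u - c) * f' u| ≤ ∫ u in m..c, (c - u) * |f' u| := by
    refine (intervalIntegral.abs_integral_le_integral_abs hmc).trans_eq ?_
    refine intervalIntegral.integral_congr fun u hu => ?_
    rw [uIcc_of_le hmc] at hu
    rw [abs_mul, abs_sub_comm, abs_of_nonneg (by linarith [hu.2] : (0:ℝ) ≤ c - u)]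
  -- Hölder
  have hH1 : ∫ u in a..m, (u - a) * |f' u| ≤
      (∫ u in a..m, (u - a) ^ p) ^ (1 / p) * (∫ u in a..m, |f' u| ^ q) ^ (1 / q) := by
    refine holder_Ioc hconj ham (L / 2) ((Ka + Kc) ^ (1 / q))
      ((continuous_id.sub continuous_const).aestronglyMeasurable) habsmeas1 ?_ ?_
    · intro u hu
      constructor
      · linarith [hu.1]
      · have := hu.2; rw [hmdef] at this; linarith
    · intro u hu
      have hu' : u ∈ Icc a c := ⟨hu.1.le, hu.2.trans hmc⟩
      exact ⟨abs_nonneg _, habsbd u hu'⟩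
  have hH2 : ∫ u in m..c, (c - u) * |f' u| ≤
      (∫ u in m..c, (c - u) ^ p) ^ (1 / p) * (∫ u in m..c, |f' u| ^ q) ^ (1 / q) := by
    refine holder_Ioc hconj hmc (L / 2) ((Ka + Kc) ^ (1 / q))
      ((continuous_const.sub continuous_id).aestronglyMeasurable) habsmeas2 ?_ ?_
    · intro u hu
      constructor
      · linarith [hu.2]
      · have := hu.1; rw [hmdef] at this; rw [hcdef]; linarith
    · intro u hu
      have hu' : u ∈ Icc a c := ⟨ham.trans hu.1.le, hu.2⟩
      exact ⟨abs_nonneg _, habsbd u hu'⟩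
  -- weight integrals
  have hp1' : p + 1 ≠ 0 := by linarith
  have hW1 : ∫ u in a..m, (u - a) ^ p = (L / 2) ^ (p + 1) / (p + 1) := by
    have h := intervalIntegral.integral_comp_sub_right (a := a) (b := m) (fun x => x ^ p) a
    rw [h, sub_self, hma, integral_rpow (Or.inl (by linarith : (-1:ℝ) < p)),
      Real.zero_rpow hp1']
    ring
  have hW2 : ∫ u in m..c, (c - u) ^ p = (L / 2) ^ (p + 1) / (p + 1) := by
    have h := intervalIntegral.integral_comp_sub_left (a := m) (b := c) (fun x => x ^ p) c
    rw [h, sub_self, hcm, integral_rpow (Or.inl (by linarith : (-1:ℝ) < p)),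
      Real.zero_rpow hp1']
    ring
  -- linear integral computations
  have hLne : L ≠ 0 := ne_of_gt hL
  have hlin : ∀ u : ℝ, (c - u) / L * Ka + (u - a) / L * Kc =
      (c * Ka - a * Kc) / L + u * ((Kc - Ka) / L) := by
    intro u; field_simp; ring
  have hlincont : Continuous (fun u : ℝ => (c - u) / L * Ka + (u - a) / L * Kc) := by
    fun_prop
  have hlinint : ∀ α β : ℝ, ∫ u in α..β, ((c - u) / L * Ka + (u - a) / L * Kc) =
      (β - α) * ((c * Ka - a * Kc) / L) + (β ^ 2 - α ^ 2) / 2 * ((Kc - Ka) / L) := by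
    intro α β
    simp only [hlin]
    rw [intervalIntegral.integral_add intervalIntegrable_const
      ((by fun_prop : Continuous fun u : ℝ => u * ((Kc - Ka) / L)).intervalIntegrable _ _),
      intervalIntegral.integral_const, intervalIntegral.integral_mul_const,
      integral_id]
    simp [smul_eq_mul]
    try ring
  have hcomp1 : ∫ u in a..m, ((c - u) / L * Ka + (u - a) / L * Kc) =
      L / 2 * ((3 * Ka + Kc) / 4) := by
    rw [hlinint, hmdef, hcdef]
    field_simp
    ring
  have hcomp2 : ∫ u in m..c, ((c - u) / L * Ka + (u - a) / L * Kc) =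
      L / 2 * ((3 * Kc + Ka) / 4) := by
    rw [hlinint, hmdef, hcdef]
    field_simp
    ring
  have hE1 : ∫ u in a..m, |f' u| ^ q ≤ L / 2 * ((3 * Ka + Kc) / 4) := by
    rw [← hcomp1]
    exact intervalIntegral.integral_mono_on ham hqint1
      (hlincont.intervalIntegrable _ _)
      (fun u hu => hptK u (Icc_subset_Icc le_rfl hmc hu))
  have hE2 : ∫ u in m..c, |f' u| ^ q ≤ L / 2 * ((3 * Kc + Ka) / 4) := by
    rw [← hcomp2]
    exact intervalIntegral.integral_mono_on hmc hqint2
      (hlincont.intervalIntegrable _ _)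
      (fun u hu => hptK u (Icc_subset_Icc ham le_rfl hu))
  -- rpow algebra
  have hL2 : (0:ℝ) < L / 2 := by linarith
  have halg : ∀ K : ℝ, 0 ≤ K →
      (1 / L) * (((L / 2) ^ (p + 1) / (p + 1)) ^ (1 / p) * ((L / 2) * K) ^ (1 / q)) =
      (1 / (p + 1)) ^ (1 / p) * (L / 4) * K ^ (1 / q) := by
    intro K hK
    have hpp1 : (0:ℝ) < p + 1 := by linarith
    rw [Real.div_rpow (Real.rpow_nonneg hL2.le _) hpp1.le]
    rw [← Real.rpow_mul hL2.le, Real.mul_rpow hL2.le hK]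
    have hexp : (p + 1) * (1 / p) = 1 + 1 / p := by field_simp
    rw [hexp]
    have h2 : (L / 2) ^ ((1:ℝ) + 1 / p) * (L / 2) ^ (1 / q) = (L / 2) ^ ((2:ℝ)) := by
      rw [← Real.rpow_add hL2, show (1:ℝ) + 1 / p + 1 / q = 1 + (1 / p + 1 / q) by ring, hpq]
      norm_num
    have h3 : (1 / (p + 1) : ℝ) ^ (1 / p) = 1 / (p + 1) ^ (1 / p) := by
      rw [Real.div_rpow zero_le_one hpp1.le, Real.one_rpow]
    rw [h3]
    have hpp1r : (0:ℝ) < (p + 1) ^ (1 / p) := Real.rpow_pos_of_pos hpp1 _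
    have h4 : (L / 2) ^ ((2:ℝ)) = L ^ 2 / 4 := by
      rw [show ((2:ℝ)) = ((2:ℕ):ℝ) by norm_num, Real.rpow_natCast]
      ring
    calc 1 / L * ((L / 2) ^ (1 + 1 / p) / (p + 1) ^ (1 / p) * ((L / 2) ^ (1 / q) * K ^ (1 / q)))
        = (L / 2) ^ ((1:ℝ) + 1 / p) * (L / 2) ^ (1 / q) * K ^ (1 / q) / (L * (p + 1) ^ (1 / p)) := by
          ring
      _ = L ^ 2 / 4 * K ^ (1 / q) / (L * (p + 1) ^ (1 / p)) := by rw [h2, h4]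
      _ = 1 / (p + 1) ^ (1 / p) * (L / 4) * K ^ (1 / q) := by
          field_simp
  -- assemble
  have hWnn : (0:ℝ) ≤ ((L / 2) ^ (p + 1) / (p + 1)) ^ (1 / p) :=
    Real.rpow_nonneg (by positivity) _
  have hK1 : (0:ℝ) ≤ L / 2 * ((3 * Ka + Kc) / 4) := by positivity
  have hK2 : (0:ℝ) ≤ L / 2 * ((3 * Kc + Ka) / 4) := by positivity
  have hqintnn1 : (0:ℝ) ≤ ∫ u in a..m, |f' u| ^ q :=
    intervalIntegral.integral_nonneg ham (fun u _ => Real.rpow_nonneg (abs_nonneg _) q)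
  have hqintnn2 : (0:ℝ) ≤ ∫ u in m..c, |f' u| ^ q :=
    intervalIntegral.integral_nonneg hmc (fun u _ => Real.rpow_nonneg (abs_nonneg _) q)
  have hJ1 : |∫ u in a..m, (u - a) * f' u| ≤
      ((L / 2) ^ (p + 1) / (p + 1)) ^ (1 / p) * ((L / 2) * ((3 * Ka + Kc) / 4)) ^ (1 / q) := by
    refine habs1.trans (hH1.trans ?_)
    rw [hW1]
    exact mul_le_mul_of_nonneg_left (Real.rpow_le_rpow hqintnn1 hE1 hq1.le) hWnn
  have hJ2 : |∫ u in m..c, (u - c) * f' u| ≤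
      ((L / 2) ^ (p + 1) / (p + 1)) ^ (1 / p) * ((L / 2) * ((3 * Kc + Ka) / 4)) ^ (1 / q) := by
    refine habs2.trans (hH2.trans ?_)
    rw [hW2]
    exact mul_le_mul_of_nonneg_left (Real.rpow_le_rpow hqintnn2 hE2 hq1.le) hWnn
  have hLinv : (0:ℝ) ≤ 1 / L := by positivity
  calc |f m - 1 / L * ∫ u in a..c, f u|
      = (1 / L) * |(∫ u in a..m, (u - a) * f' u) + ∫ u in m..c, (u - c) * f' u| := by
        rw [hiden, abs_mul, abs_of_nonneg hLinv]
    _ ≤ (1 / L) * (|∫ u in a..m, (u - a) * f' u| + |∫ u in m..c, (u - c) * f' u|) :=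
        mul_le_mul_of_nonneg_left (abs_add_le _ _) hLinv
    _ ≤ (1 / L) * (((L / 2) ^ (p + 1) / (p + 1)) ^ (1 / p) * ((L / 2) * ((3 * Ka + Kc) / 4)) ^ (1 / q) +
        ((L / 2) ^ (p + 1) / (p + 1)) ^ (1 / p) * ((L / 2) * ((3 * Kc + Ka) / 4)) ^ (1 / q)) :=
        mul_le_mul_of_nonneg_left (add_le_add hJ1 hJ2) hLinv
    _ = (1 / (p + 1)) ^ (1 / p) * (L / 4) *
        (((3 * Ka + Kc) / 4) ^ (1 / q) + ((3 * Kc + Ka) / 4) ^ (1 / q)) := by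
        rw [mul_add]
        rw [show (L / 2) * ((3 * Ka + Kc) / 4) = (L / 2) * ((3 * Ka + Kc) / 4) from rfl]
        have e1 := halg ((3 * Ka + Kc) / 4) (by positivity)
        have e2 := halg ((3 * Kc + Ka) / 4) (by positivity)
        rw [← mul_assoc, ← mul_assoc] at *
        rw [show (1 / L) * (((L / 2) ^ (p + 1) / (p + 1)) ^ (1 / p)) * ((L / 2) * ((3 * Ka + Kc) / 4)) ^ (1 / q) = (1 / (p + 1)) ^ (1 / p) * (L / 4) * ((3 * Ka + Kc) / 4) ^ (1 / q) from by rw [← e1]; try ring,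
           show (1 / L) * (((L / 2) ^ (p + 1) / (p + 1)) ^ (1 / p)) * ((L / 2) * ((3 * Kc + Ka) / 4)) ^ (1 / q) = (1 / (p + 1)) ^ (1 / p) * (L / 4) * ((3 * Kc + Ka) / 4) ^ (1 / q) from by rw [← e2]; try ring]
        ring
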